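/- (Necessity of scalar Lagrange multipliers.) Let x̄ ∈ D be a weakly efficient solution of (VP), and assume the alternative theorem applies to the maps f(·) − ȳ, g, h (i.e., the generalized convexity condition (a1) and interior condition (a2) hold for them). Then there exist ȳ ∈ f(x̄) and multipliers ξ ∈ Y₊*, η ∈ Z₊*, ζ ∈ W*, not all zero, such that ξ(y) + η(z) + ζ(w) ≥ ξ(ȳ) for all x ∈ D, y ∈ f(x), z ∈ g(x), w ∈ h(x), and moreover min η(g(x̄)) = 0 (there exists z̄ ∈ g(x̄) with η(z̄) = 0 and η(z) ≥ 0 for all z ∈ g(x̄)). -/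

import Mathlib

open Pointwise

lemma cone_add' {E : Type*} [AddCommGroup E] [Module ℝ E] {P : Set E}
    (hconv : Convex ℝ P) (hcone : ∀ t : ℝ, 0 < t → t • P ⊆ P) {a b : E}
    (ha : a ∈ P) (hb : b ∈ P) : a + b ∈ P := by
  have hmid : (1/2 : ℝ) • a + (1/2 : ℝ) • b ∈ P :=
    hconv ha hb (by norm_num) (by norm_num) (by norm_num)
  have h2 : (2:ℝ) • ((1/2 : ℝ) • a + (1/2 : ℝ) • b) ∈ P :=
    hcone 2 (by norm_num) (Set.smul_mem_smul_set hmid)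
  have : (2:ℝ) • ((1/2 : ℝ) • a + (1/2 : ℝ) • b) = a + b := by
    rw [smul_add, smul_smul, smul_smul]; norm_num
  rwa [this] at h2

lemma cone_smul_interior' {E : Type*} [AddCommGroup E] [Module ℝ E] [TopologicalSpace E]
    [ContinuousSMul ℝ E] {P : Set E} (hcone : ∀ t : ℝ, 0 < t → t • P ⊆ P) {t : ℝ} (ht : 0 < t) :
    t • interior P ⊆ interior P := by
  have hopen : IsOpen (t • interior P) := by
    rw [← Set.image_smul]
    exact isOpenMap_smul₀ ht.ne' _ isOpen_interior
  exact interior_maximal ((Set.smul_set_mono interior_subset).trans (hcone t ht)) hopen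

lemma cone_add_interior' {E : Type*} [AddCommGroup E] [Module ℝ E] [TopologicalSpace E]
    [IsTopologicalAddGroup E] {P : Set E} (hconv : Convex ℝ P)
    (hcone : ∀ t : ℝ, 0 < t → t • P ⊆ P) {a b : E}
    (ha : a ∈ P) (hb : b ∈ interior P) : a + b ∈ interior P := by
  have hsub : (fun y => a + y) '' interior P ⊆ P := by
    rintro _ ⟨y, hy, rfl⟩
    exact cone_add' hconv hcone ha (interior_subset hy)
  have hopen : IsOpen ((fun y => a + y) '' interior P) :=
    (isOpenMap_add_left a) _ isOpen_interior
  exact interior_maximal hsub hopen ⟨b, hb, rfl⟩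


/-- Theorem 3.1 (necessity): if `xbar` is a weakly efficient solution of (VP) and the
generalized convexity condition (a1) and interior condition (a2) hold for
`f(·) - ybar, g, h`, then scalar Lagrange multipliers exist, with complementary
slackness `min η(g(xbar)) = 0`. -/
theorem scalar_lagrange_necessity
    {X Y Z W : Type*}
    [AddCommGroup Y] [Module ℝ Y] [TopologicalSpace Y] [IsTopologicalAddGroup Y]
    [ContinuousSMul ℝ Y] [LocallyConvexSpace ℝ Y]
    [AddCommGroup Z] [Module ℝ Z] [TopologicalSpace Z] [IsTopologicalAddGroup Z]
    [ContinuousSMul ℝ Z] [LocallyConvexSpace ℝ Z]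
    [AddCommGroup W] [Module ℝ W] [TopologicalSpace W] [IsTopologicalAddGroup W]
    [ContinuousSMul ℝ W] [LocallyConvexSpace ℝ W]
    (f : X → Set Y) (g : X → Set Z) (h : X → Set W)
    (Ypos : Set Y) (hYconv : Convex ℝ Ypos) (hY0 : (0 : Y) ∈ Ypos)
    (hYcone : ∀ t : ℝ, 0 < t → t • Ypos ⊆ Ypos)
    (hYclosed : IsClosed Ypos) (hYpointed : Ypos ∩ (-Ypos) = {0})
    (hYint : (interior Ypos).Nonempty)
    (Zpos : Set Z) (hZconv : Convex ℝ Zpos) (hZ0 : (0 : Z) ∈ Zpos)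
    (hZcone : ∀ t : ℝ, 0 < t → t • Zpos ⊆ Zpos)
    (hZclosed : IsClosed Zpos) (hZpointed : Zpos ∩ (-Zpos) = {0})
    (hZint : (interior Zpos).Nonempty)
    (D : Set X) (hD : D = {x | (g x ∩ (-Zpos)).Nonempty ∧ (0 : W) ∈ h x})
    (xbar : X) (hxbar : xbar ∈ D)
    -- (a1) and (a2) for the maps `f(·) - ybar`, `g`, `h`:
    (ha : ∀ ybar ∈ f xbar,
      Convex ℝ {p : Y × Z × W |
          p.1 ∈ ⋃ t ∈ Set.Ioi (0 : ℝ),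
              (t • ((⋃ x ∈ D, f x) - {ybar}) + interior Ypos) ∧
          p.2.1 ∈ ⋃ t ∈ Set.Ioi (0 : ℝ), (t • (⋃ x ∈ D, g x) + interior Zpos) ∧
          p.2.2 ∈ ⋃ t ∈ Set.Ioi (0 : ℝ), t • (⋃ x ∈ D, h x)} ∧
      (interior {p : Y × Z × W |
          p.1 ∈ ⋃ t ∈ Set.Ioi (0 : ℝ),
              (t • ((⋃ x ∈ D, f x) - {ybar}) + interior Ypos) ∧
          p.2.1 ∈ ⋃ t ∈ Set.Ioi (0 : ℝ), (t • (⋃ x ∈ D, g x) + interior Zpos) ∧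
          p.2.2 ∈ ⋃ t ∈ Set.Ioi (0 : ℝ), t • (⋃ x ∈ D, h x)}).Nonempty)
    -- `xbar` is a weakly efficient solution of (VP):
    (hweff : ∃ ybar ∈ f xbar, ∀ x ∈ D, ∀ y ∈ f x, ybar - y ∉ interior Ypos) :
    ∃ ybar ∈ f xbar, ∃ (ξ : Y →L[ℝ] ℝ) (η : Z →L[ℝ] ℝ) (ζ : W →L[ℝ] ℝ),
      (ξ ≠ 0 ∨ η ≠ 0 ∨ ζ ≠ 0) ∧
      (∀ y ∈ Ypos, 0 ≤ ξ y) ∧ (∀ z ∈ Zpos, 0 ≤ η z) ∧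
      (∀ x ∈ D, ∀ y ∈ f x, ∀ z ∈ g x, ∀ w ∈ h x, ξ ybar ≤ ξ y + η z + ζ w) ∧
      (∃ zbar ∈ g xbar, η zbar = 0) ∧ (∀ z ∈ g xbar, 0 ≤ η z) := by
  obtain ⟨ybar, hybar, hwe⟩ := hweff
  obtain ⟨hSconv, hSint⟩ := ha ybar hybar
  set S : Set (Y × Z × W) := {p : Y × Z × W |
      p.1 ∈ ⋃ t ∈ Set.Ioi (0 : ℝ),
          (t • ((⋃ x ∈ D, f x) - {ybar}) + interior Ypos) ∧
      p.2.1 ∈ ⋃ t ∈ Set.Ioi (0 : ℝ), (t • (⋃ x ∈ D, g x) + interior Zpos) ∧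
      p.2.2 ∈ ⋃ t ∈ Set.Ioi (0 : ℝ), t • (⋃ x ∈ D, h x)} with hSdef
  -- membership lemma
  have memS : ∀ x ∈ D, ∀ y ∈ f x, ∀ z ∈ g x, ∀ w ∈ h x,
      ∀ ky ∈ interior Ypos, ∀ kz ∈ interior Zpos,
      ((y - ybar) + ky, z + kz, w) ∈ S := by
    intro x hx y hy z hz w hw ky hky kz hkz
    refine ⟨?_, ?_, ?_⟩
    · have h1 : y - ybar ∈ (⋃ x ∈ D, f x) - {ybar} :=
        Set.sub_mem_sub (Set.mem_biUnion hx hy) rfl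
      have h2 : (y - ybar) + ky ∈
          (1:ℝ) • ((⋃ x ∈ D, f x) - {ybar}) + interior Ypos := by
        rw [one_smul]
        exact Set.add_mem_add h1 hky
      exact Set.mem_biUnion (Set.mem_Ioi.mpr one_pos) h2
    · have h2 : z + kz ∈ (1:ℝ) • (⋃ x ∈ D, g x) + interior Zpos := by
        rw [one_smul]
        exact Set.add_mem_add (Set.mem_biUnion hx hz) hkz
      exact Set.mem_biUnion (Set.mem_Ioi.mpr one_pos) h2
    · have h2 : w ∈ (1:ℝ) • (⋃ x ∈ D, h x) := by
        rw [one_smul]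
        exact Set.mem_biUnion hx hw
      exact Set.mem_biUnion (Set.mem_Ioi.mpr one_pos) h2
  -- zero is not in S
  have h0S : (0 : Y × Z × W) ∉ S := by
    rintro ⟨h1, -, -⟩
    simp only [Prod.fst_zero] at h1
    obtain ⟨t, ht, hmem⟩ := Set.mem_iUnion₂.1 h1
    rw [Set.mem_Ioi] at ht
    obtain ⟨a, haA, k, hk, hsum⟩ := Set.mem_add.1 hmem
    obtain ⟨u, hu, rfl⟩ := haA
    obtain ⟨y, hyU, b, hb, rfl⟩ := Set.mem_sub.1 hu
    rw [Set.mem_singleton_iff] at hb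
    obtain ⟨x, hx, hyx⟩ := Set.mem_iUnion₂.1 hyU
    have hsum2 : t • (y - b) + k = 0 := hsum
    have h' : t • (b - y) = k := by
      linear_combination (norm := module) -hsum2
    have hkey : b - y = t⁻¹ • k := by
      rw [← h', smul_smul, inv_mul_cancel₀ ht.ne', one_smul]
    have hmem' : t⁻¹ • k ∈ interior Ypos :=
      cone_smul_interior' hYcone (inv_pos.mpr ht) (Set.smul_mem_smul_set hk)
    refine hwe x hx y hyx ?_
    rw [← hb]
    exact hkey ▸ hmem' 
  -- separation
  have h0int : (0 : Y × Z × W) ∉ interior S := fun hc => h0S (interior_subset hc)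
  obtain ⟨φ, hφ⟩ := geometric_hahn_banach_open_point hSconv.interior isOpen_interior h0int
  have hφ0 : φ (0 : Y × Z × W) = 0 := map_zero φ
  obtain ⟨q, hq⟩ := hSint
  have hφq : φ q < 0 := by rw [← hφ0]; exact hφ q hq
  -- φ ≤ 0 on S
  have hφS : ∀ p ∈ S, φ p ≤ 0 := by
    intro p hp
    by_contra hc
    push_neg at hc
    set ε : ℝ := φ p / (φ p - φ q) with hε
    have hεd : (0:ℝ) < φ p - φ q := by linarith
    have hε0 : 0 < ε := div_pos hc hεd
    have hε1 : ε < 1 := (div_lt_one hεd).2 (by linarith)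
    have hm : ε • q + (1 - ε) • p ∈ interior S :=
      hSconv.combo_interior_self_mem_interior hq hp hε0 (by linarith) (by ring)
    have hlt := hφ _ hm
    rw [← hφ0] at hφq
    rw [map_add, map_smul, map_smul, smul_eq_mul, smul_eq_mul, hφ0] at hlt
    have heq : ε * φ q + (1 - ε) * φ p = 0 := by
      rw [hε]; field_simp; ring
    linarith
  -- the multipliers
  set ξ : Y →L[ℝ] ℝ := -(φ.comp (ContinuousLinearMap.inl ℝ Y (Z × W))) with hξdef
  set η : Z →L[ℝ] ℝ := -(φ.comp ((ContinuousLinearMap.inr ℝ Y (Z × W)).comp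
      (ContinuousLinearMap.inl ℝ Z W))) with hηdef
  set ζ : W →L[ℝ] ℝ := -(φ.comp ((ContinuousLinearMap.inr ℝ Y (Z × W)).comp
      (ContinuousLinearMap.inr ℝ Z W))) with hζdef
  have hφ_eq : ∀ (y : Y) (z : Z) (w : W), φ (y, z, w) = -(ξ y + η z + ζ w) := by
    intro y z w
    have hsplit : ((y, z, w) : Y × Z × W)
        = (y, (0:Z), (0:W)) + ((0:Y), z, (0:W)) + ((0:Y), (0:Z), w) := by
      simp [Prod.ext_iff]
    rw [hsplit, map_add, map_add]
    simp [hξdef, hηdef, hζdef]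
    change _ = _ + (_ + φ (y, (0:Z), (0:W)))
    ring
  obtain ⟨k0, hk0⟩ := hYint
  obtain ⟨k0', hk0'⟩ := hZint
  -- main inequality
  have hmain : ∀ x ∈ D, ∀ y ∈ f x, ∀ z ∈ g x, ∀ w ∈ h x, ξ ybar ≤ ξ y + η z + ζ w := by
    intro x hx y hy z hz w hw
    have key : ∀ ε : ℝ, 0 < ε → ξ ybar ≤ ξ y + η z + ζ w + ε * (ξ k0 + η k0') := by
      intro ε hε
      have hky : ε • k0 ∈ interior Ypos :=
        cone_smul_interior' hYcone hε (Set.smul_mem_smul_set hk0)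
      have hkz : ε • k0' ∈ interior Zpos :=
        cone_smul_interior' hZcone hε (Set.smul_mem_smul_set hk0')
      have hp := hφS _ (memS x hx y hy z hz w hw _ hky _ hkz)
      rw [hφ_eq] at hp
      simp only [map_add, map_sub, map_smul, smul_eq_mul] at hp
      linarith
    rcases le_or_gt (ξ k0 + η k0') 0 with hC | hC
    · have h1 := key 1 one_pos
      nlinarith
    · refine le_of_forall_pos_le_add fun δ hδ => ?_
      have h1 := key (δ / (ξ k0 + η k0')) (div_pos hδ hC)
      rw [div_mul_cancel₀ _ hC.ne'] at h1
      linarith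
  -- data at xbar
  have hxbar' := hxbar
  rw [hD] at hxbar'
  obtain ⟨⟨z0, hz0g, hz0n⟩, h0w⟩ := hxbar'
  -- positivity of ξ on Ypos
  have hξpos : ∀ y ∈ Ypos, 0 ≤ ξ y := by
    intro y hy
    by_contra hc
    push_neg at hc
    have key : ∀ s : ℝ, 0 < s → 0 ≤ ξ k0 + s * ξ y + η z0 + η k0' := by
      intro s hs
      have h1 : s • y ∈ Ypos := hYcone s hs (Set.smul_mem_smul_set hy)
      have hky : k0 + s • y ∈ interior Ypos := by
        have := cone_add_interior' hYconv hYcone h1 hk0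
        rwa [add_comm] at this
      have hp := hφS _ (memS xbar hxbar ybar hybar z0 hz0g 0 h0w _ hky _ hk0')
      rw [hφ_eq] at hp
      simp only [map_add, map_smul, smul_eq_mul, sub_self, map_zero] at hp
      linarith
    set B : ℝ := ξ k0 + η z0 + η k0' with hB
    have hs : 0 < (|B| + 1) / (-(ξ y)) := div_pos (by positivity) (by linarith)
    have h2 := key _ hs
    have hcne : ξ y ≠ 0 := ne_of_lt hc
    have h3 : (|B| + 1) / (-(ξ y)) * ξ y = -(|B| + 1) := by
      rw [div_mul_eq_mul_div, mul_div_assoc, div_neg, div_self hcne]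
      ring
    rw [h3] at h2
    have := le_abs_self B
    rw [hB] at this
    linarith
  -- positivity of η on Zpos
  have hηpos : ∀ z ∈ Zpos, 0 ≤ η z := by
    intro z hz
    by_contra hc
    push_neg at hc
    have key : ∀ s : ℝ, 0 < s → 0 ≤ ξ k0 + η z0 + η k0' + s * η z := by
      intro s hs
      have h1 : s • z ∈ Zpos := hZcone s hs (Set.smul_mem_smul_set hz)
      have hkz : k0' + s • z ∈ interior Zpos := by
        have := cone_add_interior' hZconv hZcone h1 hk0'
        rwa [add_comm] at this
      have hp := hφS _ (memS xbar hxbar ybar hybar z0 hz0g 0 h0w _ hk0 _ hkz)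
      rw [hφ_eq] at hp
      simp only [map_add, map_smul, smul_eq_mul, sub_self, map_zero] at hp
      linarith
    set B : ℝ := ξ k0 + η z0 + η k0' with hB
    have hs : 0 < (|B| + 1) / (-(η z)) := div_pos (by positivity) (by linarith)
    have h2 := key _ hs
    have hcne : η z ≠ 0 := ne_of_lt hc
    have h3 : (|B| + 1) / (-(η z)) * η z = -(|B| + 1) := by
      rw [div_mul_eq_mul_div, mul_div_assoc, div_neg, div_self hcne]
      ring
    rw [h3] at h2
    have := le_abs_self B
    rw [hB] at this
    linarith
  -- nontriviality
  have hnz : ξ ≠ 0 ∨ η ≠ 0 ∨ ζ ≠ 0 := by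
    by_contra hcon
    push_neg at hcon
    obtain ⟨h1, h2, h3⟩ := hcon
    obtain ⟨q1, q2, q3⟩ := q
    rw [hφ_eq] at hφq
    rw [h1, h2, h3] at hφq
    simp at hφq
  -- complementary slackness
  have hgpos : ∀ z ∈ g xbar, 0 ≤ η z := by
    intro z hz
    have := hmain xbar hxbar ybar hybar z hz 0 h0w
    rw [map_zero] at this
    linarith
  have hzbar : η z0 = 0 := by
    have h1 := hgpos z0 hz0g
    have h2 : -z0 ∈ Zpos := by
      rw [Set.mem_neg] at hz0n
      exact hz0n
    have h3 := hηpos _ h2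
    rw [map_neg] at h3
    linarith
  exact ⟨ybar, hybar, ξ, η, ζ, hnz, hξpos, hηpos, hmain, ⟨z0, hz0g, hzbar⟩, hgpos⟩
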